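/- Let σ = ⟨ρ₁,…,ρ_k⟩ be a cone of the fan of X (satisfying the conditions of Theorem 3.8: every primitive relation has right-hand side 0 or a ray generator, each ray generator appearing on the right of at most one primitive relation). Let {β₁',…,β_s'} be special exceptional classes for σ, and let {β₁,…,β_t} be exceptional classes whose exceptional sets S_i each satisfy |S_i ∩ {D₁,…,D_k}| = |S_i| − 1, with ∫_{β₁} D₁ = −1. If β₁+⋯+β_t = β₁'+⋯+β_s', then ∫_{β_i'} D₁ ≠ 0 for some i. -/

import Mathlib

/-- A complete nonsingular (simplicial) fan in ℤⁿ, described combinatorially: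
cones are recorded by their (finite) sets of primitive ray generators. -/
structure CompleteNonsingFan (n : ℕ) where
  rays : Finset (Fin n → ℤ)
  cones : Finset (Finset (Fin n → ℤ))
  empty_mem : ∅ ∈ cones
  singleton_mem : ∀ ρ ∈ rays, {ρ} ∈ cones
  cone_rays : ∀ σ ∈ cones, σ ⊆ rays
  face_mem : ∀ σ ∈ cones, ∀ τ ⊆ σ, τ ∈ cones
  /-- nonsingularity: the generators of every cone form part of a ℤ-basis of ℤⁿ -/
  nonsingular : ∀ σ ∈ cones, ∃ b : Module.Basis (Fin n) ℤ (Fin n → ℤ),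
      (σ : Set (Fin n → ℤ)) ⊆ Set.range ⇑b
  /-- completeness: every point of ℝⁿ lies in some cone -/
  complete : ∀ x : Fin n → ℝ, ∃ σ ∈ cones, ∃ c : (Fin n → ℤ) → ℝ,
      (∀ v, 0 ≤ c v) ∧ x = ∑ v ∈ σ, c v • (fun i => (v i : ℝ))

/-- A primitive set: a set of rays not spanning a cone, every proper subset of
which spans a cone. -/
def IsPrimitiveSet {n : ℕ} (F : CompleteNonsingFan n) (P : Finset (Fin n → ℤ)) : Prop :=
  P ⊆ F.rays ∧ P ∉ F.cones ∧ ∀ ρ ∈ P, P.erase ρ ∈ F.cones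

/-- An exceptional set: divisors whose ray generators are linearly independent and
sum to another ray generator ρ̃ (the exceptional divisor). -/
def IsExceptionalSet {n : ℕ} (F : CompleteNonsingFan n)
    (E : Finset (Fin n → ℤ)) (ρt : Fin n → ℤ) : Prop :=
  E ⊆ F.rays ∧ ρt ∈ F.rays ∧ ρt ∉ E ∧
    LinearIndependent ℤ (fun v : E => (v : Fin n → ℤ)) ∧ ∑ v ∈ E, v = ρt

/-- The exceptional class of an exceptional relation Σ_{ρ∈E} ρ = ρ̃, as the function
ρ ↦ ∫_β D_ρ: value 1 on E, −1 at ρ̃, 0 elsewhere. -/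
def excClass {n : ℕ} (E : Finset (Fin n → ℤ)) (ρt : Fin n → ℤ) : (Fin n → ℤ) → ℤ :=
  fun ρ => (if ρ ∈ E then 1 else 0) - (if ρ = ρt then 1 else 0)

/-- Special for a cone σ: some k−1 of the generators of E, and ρ̃, lie in σ. -/
def IsSpecialFor {n : ℕ} (σ E : Finset (Fin n → ℤ)) (ρt : Fin n → ℤ) : Prop :=
  ρt ∈ σ ∧ ∃ ρ₀ ∈ E, E.erase ρ₀ ⊆ σ

section Aux

variable {n : ℕ}

lemma coordOnSigma (b : Module.Basis (Fin n) ℤ (Fin n → ℤ)) (σ : Finset (Fin n → ℤ))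
    (hσb : (σ : Set (Fin n → ℤ)) ⊆ Set.range ⇑b) {ρs : Fin n → ℤ} (k : Fin n)
    (hk : b k = ρs) : ∀ v ∈ σ, b.coord k v = if v = ρs then 1 else 0 := by
  intro v hv
  obtain ⟨kv, hkv⟩ := hσb hv
  rw [← hkv, ← hk, Module.Basis.coord_apply, Module.Basis.repr_self, Finsupp.single_apply]
  simp [b.injective.eq_iff, eq_comm]

lemma caseA (b : Module.Basis (Fin n) ℤ (Fin n → ℤ)) (σ : Finset (Fin n → ℤ))
    (hσb : (σ : Set (Fin n → ℤ)) ⊆ Set.range ⇑b) {ρ1 : Fin n → ℤ} (hρ1 : ρ1 ∈ σ)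
    (E' : Finset (Fin n → ℤ)) (ρt' : Fin n → ℤ)
    (hsum' : ∑ v ∈ E', v = ρt') (hnotE : ρt' ∉ E') (hρt'σ : ρt' ∈ σ) (hne : ρt' ≠ ρ1)
    (m : Multiset (Fin n → ℤ)) (x₀ : Fin n → ℤ) (hx₀σ : x₀ ∉ σ)
    (hmsum : m.sum = ρ1) (hfilter : m.filter (fun x => x ∉ σ) = {x₀})
    (hx₀E' : x₀ ∈ E') (herase : E'.erase x₀ ⊆ σ) : False := by
  obtain ⟨k, hk⟩ := hσb hρt'σ
  have hcoord := coordOnSigma b σ hσb k hk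
  have h1 : b.coord k x₀ = 1 := by
    have hs : x₀ + ∑ v ∈ E'.erase x₀, v = ρt' := by
      rw [← hsum']
      simpa using Finset.add_sum_erase E' (fun v => v) hx₀E'
    have h2 := congrArg (b.coord k) hs
    rw [map_add, map_sum] at h2
    have hz : ∑ v ∈ E'.erase x₀, b.coord k v = 0 := by
      apply Finset.sum_eq_zero
      intro v hv
      rw [hcoord v (herase hv), if_neg]
      intro hveq; exact hnotE (hveq ▸ (Finset.mem_of_mem_erase hv))
    rw [hz, add_zero, hcoord ρt' hρt'σ, if_pos rfl] at h2
    exact h2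
  have hsplit : (m.filter (fun x => x ∉ σ)) + (m.filter (fun x => ¬ x ∉ σ)) = m :=
    Multiset.filter_add_not _ m
  have hmsum2 : x₀ + (m.filter (fun x => ¬ x ∉ σ)).sum = ρ1 := by
    calc x₀ + (m.filter (fun x => ¬ x ∉ σ)).sum
        = (m.filter (fun x => x ∉ σ)).sum + (m.filter (fun x => ¬ x ∉ σ)).sum := by
          rw [hfilter]; simp
      _ = m.sum := by rw [← Multiset.sum_add, hsplit]
      _ = ρ1 := hmsum
  have h3 := congrArg (b.coord k) hmsum2
  rw [map_add] at h3
  have hrest : 0 ≤ b.coord k (m.filter (fun x => ¬ x ∉ σ)).sum := by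
    rw [map_multiset_sum]
    apply Multiset.sum_nonneg
    intro z hz
    obtain ⟨v, hv, rfl⟩ := Multiset.mem_map.mp hz
    have hvσ : v ∈ σ := not_not.mp (Multiset.mem_filter.mp hv).2
    rw [hcoord v hvσ]
    split <;> norm_num
  have hρ1c : b.coord k ρ1 = 0 := by
    rw [hcoord ρ1 hρ1, if_neg (fun h => hne h.symm)]
  rw [h1, hρ1c] at h3
  linarith

lemma finsetValSum (s : Finset (Fin n → ℤ)) : s.val.sum = ∑ v ∈ s, v := by
  rw [Finset.sum_eq_multiset_sum, Multiset.map_id']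

lemma key (b : Module.Basis (Fin n) ℤ (Fin n → ℤ)) (σ : Finset (Fin n → ℤ))
    (hσb : (σ : Set (Fin n → ℤ)) ⊆ Set.range ⇑b) (ρ1 : Fin n → ℤ) (hρ1 : ρ1 ∈ σ)
    {ι κ : Type} [DecidableEq ι] [Fintype κ]
    (E : ι → Finset (Fin n → ℤ)) (ρt : ι → Fin n → ℤ)
    (hEsum : ∀ i, ∑ v ∈ E i, v = ρt i) (hρtE : ∀ i, ρt i ∉ E i)
    (hout : ∀ i, ((E i).filter (fun x => x ∉ σ)).card = 1)
    (E' : κ → Finset (Fin n → ℤ)) (ρt' : κ → Fin n → ℤ)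
    (hE'sum : ∀ j, ∑ v ∈ E' j, v = ρt' j) (hρt'E' : ∀ j, ρt' j ∉ E' j)
    (hρt'σ : ∀ j, ρt' j ∈ σ) (hρt'ne : ∀ j, ρt' j ≠ ρ1) (hρ1E' : ∀ j, ρ1 ∉ E' j)
    (hspec : ∀ j, ∃ ρ₀ ∈ E' j, (E' j).erase ρ₀ ⊆ σ)
    (N : ℕ) : ∀ (I : Finset ι), I.card ≤ N → ∀ (m : Multiset (Fin n → ℤ)),
      m.sum = ρ1 → (Multiset.card (m.filter (fun x => x ∉ σ))) = 1 →
      (∀ ρ, ((m.count ρ : ℤ) - (if ρ = ρ1 then 1 else 0)) +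
          ∑ i ∈ I, excClass (E i) (ρt i) ρ = ∑ j, excClass (E' j) (ρt' j) ρ) → False := by
  induction N using Nat.strong_induction_on with
  | _ N ih =>
  intro I hIN m hm1 hfil heq
  obtain ⟨x₀, hx₀⟩ := Multiset.card_eq_one.mp hfil
  have hx₀f : x₀ ∈ m.filter (fun x => x ∉ σ) := by rw [hx₀]; simp
  have hx₀m : x₀ ∈ m := (Multiset.mem_filter.mp hx₀f).1
  have hx₀σ : x₀ ∉ σ := (Multiset.mem_filter.mp hx₀f).2
  have hcount : m.count x₀ = 1 := by
    have h := Multiset.count_filter (p := fun x => x ∉ σ) (a := x₀) (s := m)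
    rw [hx₀, if_pos hx₀σ, Multiset.count_singleton_self] at h
    exact h.symm
  have hx₀ρ1 : x₀ ≠ ρ1 := fun h => hx₀σ (h ▸ hρ1)
  by_cases hA : ∃ j, x₀ ∈ E' j
  · obtain ⟨j, hj⟩ := hA
    obtain ⟨ρ₀, hρ₀, herase⟩ := hspec j
    have hx₀ρ₀ : x₀ = ρ₀ := by
      by_contra h
      exact hx₀σ (herase (Finset.mem_erase.mpr ⟨h, hj⟩))
    exact caseA b σ hσb hρ1 (E' j) (ρt' j) (hE'sum j) (hρt'E' j) (hρt'σ j) (hρt'ne j)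
      m x₀ hx₀σ hm1 hx₀ hj (by rw [hx₀ρ₀]; exact herase)
  · push_neg at hA
    have hrhs : ∑ j, excClass (E' j) (ρt' j) x₀ = 0 := by
      apply Finset.sum_eq_zero
      intro j _
      simp only [excClass]
      rw [if_neg (hA j), if_neg (show ¬ x₀ = ρt' j from fun h => hx₀σ (by rw [h]; exact hρt'σ j))]
      ring
    have heqx := heq x₀
    rw [hrhs, hcount, if_neg hx₀ρ1] at heqx
    have hIsum : ∑ i ∈ I, excClass (E i) (ρt i) x₀ = -1 := by push_cast at heqx; linarith
    have hex : ∃ i ∈ I, excClass (E i) (ρt i) x₀ < 0 := by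
      by_contra h
      push_neg at h
      have := Finset.sum_nonneg h
      omega
    obtain ⟨i₁, hi₁I, hneg⟩ := hex
    have hx1 : x₀ ∉ E i₁ := by
      intro h
      simp only [excClass, if_pos h] at hneg
      split_ifs at hneg <;> omega
    have hx2 : x₀ = ρt i₁ := by
      by_contra h
      simp only [excClass, if_neg h] at hneg
      split_ifs at hneg <;> omega
    set m' := (m.erase x₀) + (E i₁).val with hm'def
    have hcons : x₀ ::ₘ m.erase x₀ = m := Multiset.cons_erase hx₀m
    have hsum_erase : (m.erase x₀).sum = ρ1 - x₀ := by
      have h2 : x₀ + (m.erase x₀).sum = ρ1 := by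
        rw [← Multiset.sum_cons, hcons, hm1]
      exact eq_sub_of_add_eq' h2
    have hm'sum : m'.sum = ρ1 := by
      rw [hm'def, Multiset.sum_add, hsum_erase, finsetValSum, hEsum i₁, ← hx2]
      abel
    have hfe : (m.erase x₀).filter (fun x => x ∉ σ) = 0 := by
      have h2 : m.filter (fun x => x ∉ σ)
          = x₀ ::ₘ (m.erase x₀).filter (fun x => x ∉ σ) := by
        conv_lhs => rw [← hcons]
        rw [Multiset.filter_cons_of_pos (p := fun x => x ∉ σ) (m.erase x₀) hx₀σ]
      rw [hx₀] at h2
      have h3 := congrArg Multiset.card h2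
      simp only [Multiset.card_singleton, Multiset.card_cons] at h3
      rw [← Multiset.card_eq_zero]
      omega
    have hfil' : Multiset.card (m'.filter (fun x => x ∉ σ)) = 1 := by
      rw [hm'def, Multiset.filter_add, hfe, zero_add, ← Finset.filter_val]
      exact hout i₁
    have hcnt : ∀ ρ, (m'.count ρ : ℤ) = (m.count ρ : ℤ)
        + (if ρ ∈ E i₁ then 1 else 0) - (if ρ = x₀ then 1 else 0) := by
      intro ρ
      have hEc : ((E i₁).val.count ρ : ℤ) = if ρ ∈ E i₁ then 1 else 0 := by
        split_ifs with h
        · exact_mod_cast Multiset.count_eq_one_of_mem (E i₁).nodup h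
        · exact_mod_cast Multiset.count_eq_zero_of_notMem h
      rw [hm'def, Multiset.count_add]
      push_cast
      rw [hEc]
      by_cases h : ρ = x₀
      · subst h
        rw [Multiset.count_erase_self, hcount]
        simp [hx1]
      · rw [Multiset.count_erase_of_ne h]
        simp [h]
    have heq' : ∀ ρ, ((m'.count ρ : ℤ) - (if ρ = ρ1 then 1 else 0)) +
        ∑ i ∈ I.erase i₁, excClass (E i) (ρt i) ρ = ∑ j, excClass (E' j) (ρt' j) ρ := by
      intro ρ
      have h0 := heq ρ
      rw [← Finset.add_sum_erase _ _ hi₁I] at h0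
      rw [hcnt ρ]
      have hexp : excClass (E i₁) (ρt i₁) ρ
          = (if ρ ∈ E i₁ then 1 else 0) - (if ρ = x₀ then 1 else 0) := by
        simp only [excClass, ← hx2]
      rw [hexp] at h0
      linarith
    have hlt : (I.erase i₁).card < N := by
      have h4 := Finset.card_erase_of_mem hi₁I
      have h5 : 0 < I.card := Finset.card_pos.mpr ⟨i₁, hi₁I⟩
      omega
    exact ih (I.erase i₁).card hlt (I.erase i₁) le_rfl m' hm'sum hfil' heq'

end Aux


/-- Lemma 4.10: let σ = ⟨ρ₁,…,ρ_k⟩ be a cone of a fan in which every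
primitive relation has right-hand side 0 or a ray generator, each ray generator
appearing on the right of at most one primitive relation. Let β'₁,…,β'_s be special
exceptional classes for σ, and β₀,…,β_t exceptional classes whose exceptional sets
Sᵢ satisfy |Sᵢ ∩ σ| = |Sᵢ| − 1, with ∫_{β₀} D₁ = −1 for a given ray ρ₁ ∈ σ.
If β₀+⋯+β_t = β'₁+⋯+β'_s then ∫_{β'ᵢ} D₁ ≠ 0 for some i. -/
theorem stmt_11 (n : ℕ) (F : CompleteNonsingFan n)
    (hprim : ∀ P, IsPrimitiveSet F P → (∑ v ∈ P, v = 0 ∨ ∑ v ∈ P, v ∈ F.rays))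
    (huniq : ∀ P Q, IsPrimitiveSet F P → IsPrimitiveSet F Q →
        ∑ v ∈ P, v ∈ F.rays → ∑ v ∈ P, v = ∑ v ∈ Q, v → P = Q)
    (σ : Finset (Fin n → ℤ)) (hσ : σ ∈ F.cones)
    (ρ1 : Fin n → ℤ) (hρ1 : ρ1 ∈ σ)
    (s : ℕ) (E' : Fin s → Finset (Fin n → ℤ)) (ρt' : Fin s → (Fin n → ℤ))
    (hexc' : ∀ i, IsExceptionalSet F (E' i) (ρt' i))
    (hspec' : ∀ i, IsSpecialFor σ (E' i) (ρt' i))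
    (t : ℕ) (E : Fin (t + 1) → Finset (Fin n → ℤ)) (ρt : Fin (t + 1) → (Fin n → ℤ))
    (hexc : ∀ i, IsExceptionalSet F (E i) (ρt i))
    (hcap : ∀ i, ((E i) ∩ σ).card = (E i).card - 1)
    (h1 : excClass (E 0) (ρt 0) ρ1 = -1)
    (hsum : ∀ ρ, ∑ i, excClass (E i) (ρt i) ρ = ∑ i, excClass (E' i) (ρt' i) ρ) :
    ∃ i, excClass (E' i) (ρt' i) ρ1 ≠ 0 := by
  by_contra hcon
  push_neg at hcon
  obtain ⟨b, hb⟩ := F.nonsingular σ hσ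
  -- facts about the special classes
  have hE'facts : ∀ j, ρ1 ∉ E' j ∧ ρt' j ≠ ρ1 := by
    intro j
    have h := hcon j
    simp only [excClass] at h
    constructor
    · intro hmem
      rw [if_pos hmem] at h
      split_ifs at h with h2
      · exact (hexc' j).2.2.1 (by rw [← h2]; exact hmem)
      · omega
    · intro h2
      have hni := (hexc' j).2.2.1
      rw [h2] at hni
      rw [if_pos h2.symm, if_neg hni] at h
      omega
  -- facts from h1
  have hE0ρ1 : ρ1 ∉ E 0 := by
    intro h
    simp only [excClass, if_pos h] at h1
    split_ifs at h1 <;> omega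
  have hρt0 : ρ1 = ρt 0 := by
    by_contra h
    simp only [excClass, if_neg h] at h1
    split_ifs at h1 <;> omega
  -- each E i is nonempty
  have hEne : ∀ i : Fin (t+1), (E i).Nonempty := by
    intro i
    obtain ⟨bi, hbi⟩ := F.nonsingular {ρt i} (F.singleton_mem _ (hexc i).2.1)
    have hne0 : ρt i ≠ 0 := by
      obtain ⟨k, hk⟩ := hbi (Finset.mem_coe.mpr (Finset.mem_singleton_self _))
      rw [← hk]; exact bi.ne_zero k
    by_contra h
    rw [Finset.not_nonempty_iff_eq_empty] at h
    have hs := (hexc i).2.2.2.2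
    rw [h, Finset.sum_empty] at hs
    exact hne0 hs.symm
  -- exactly one generator of each E i lies outside σ
  have hout : ∀ i : Fin (t+1), ((E i).filter (fun x => x ∉ σ)).card = 1 := by
    intro i
    have hc := hcap i
    have hpart := Finset.card_filter_add_card_filter_not
      (s := E i) (p := fun x => x ∈ σ)
    have hone : 1 ≤ (E i).card := Finset.card_pos.mpr (hEne i)
    have hint : (E i ∩ σ) = (E i).filter (fun x => x ∈ σ) := by
      ext x
      simp [Finset.mem_filter, Finset.mem_inter]
    rw [hint] at hc
    omega
  -- initial merged relation m = (E 0).val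
  have hsum0 : (E 0).val.sum = ρ1 := by
    rw [finsetValSum, (hexc 0).2.2.2.2, ← hρt0]
  have hfil0 : Multiset.card ((E 0).val.filter (fun x => x ∉ σ)) = 1 := by
    rw [← Finset.filter_val]
    exact hout 0
  have hinit : ∀ ρ, (((E 0).val.count ρ : ℤ) - (if ρ = ρ1 then 1 else 0)) +
      ∑ i ∈ Finset.univ.erase (0 : Fin (t+1)), excClass (E i) (ρt i) ρ
      = ∑ j, excClass (E' j) (ρt' j) ρ := by
    intro ρ
    have hs := hsum ρ
    rw [← Finset.add_sum_erase _ _ (Finset.mem_univ (0 : Fin (t+1)))] at hs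
    have hcv : (((E 0).val.count ρ : ℤ)) = if ρ ∈ E 0 then 1 else 0 := by
      split_ifs with h
      · exact_mod_cast Multiset.count_eq_one_of_mem (E 0).nodup h
      · exact_mod_cast Multiset.count_eq_zero_of_notMem h
    rw [hcv]
    have hexp : excClass (E 0) (ρt 0) ρ
        = (if ρ ∈ E 0 then 1 else 0) - (if ρ = ρ1 then 1 else 0) := by
      simp only [excClass, hρt0]
    rw [hexp] at hs
    linarith
  exact key b σ hb ρ1 hρ1 E ρt (fun i => (hexc i).2.2.2.2) (fun i => (hexc i).2.2.1)
    hout E' ρt' (fun j => (hexc' j).2.2.2.2) (fun j => (hexc' j).2.2.1)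
    (fun j => (hspec' j).1) (fun j => (hE'facts j).2) (fun j => (hE'facts j).1)
    (fun j => (hspec' j).2) (t + 1) (Finset.univ.erase 0)
    (le_trans (Finset.card_le_univ _) (by simp)) (E 0).val hsum0 hfil0 hinit
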